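/- Let S, T, D be monoids in a strict monoidal category and let λ1 : T⊗S → S⊗T, λ2 : D⊗T → T⊗D, λ3 : D⊗S → S⊗D be weak distributive laws satisfying the Yang–Baxter relation. Set ν_T = ∇_{S⊗T}∘(η_S⊗η_T), ν_D = ∇_{S⊗D}∘(η_S⊗η_D), ψ_{T⊗D} = (λ1⊗D)∘(T⊗λ3)∘(∇_{T⊗D}⊗S), and ∇_{S⊗T⊗D} = (μ_S⊗T⊗D)∘(S⊗ψ_{T⊗D})∘(S⊗T⊗D⊗η_S). Then the two iterated preunit conditions hold: (μ_S⊗T⊗D)∘(S⊗σ_T⊗D)∘(λ1⊗λ2)∘(T⊗λ3⊗T)∘(∇_{T⊗D}⊗ν_T) = ∇_{S⊗T⊗D}∘(η_S⊗T⊗D) and (μ_S⊗T⊗D)∘(S⊗λ1⊗D)∘(S⊗T⊗σ_D)∘(S⊗λ2⊗D)∘(ν_D⊗T⊗D) = ∇_{S⊗T⊗D}∘(η_S⊗T⊗D); moreover ν_{T⊗D} = ∇_{S⊗T⊗D}∘(μ_S⊗T⊗D)∘(S⊗λ1⊗D)∘(ν_T⊗ν_D) equals (λ1⊗D)∘(T⊗λ3)∘(λ2⊗S)∘(η_D⊗η_T⊗η_S).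 -/

import Mathlib

open CategoryTheory MonoidalCategory

namespace IteratedWCP

universe v u

variable {C : Type u} [Category.{v} C] [MonoidalCategory C]

/-- The monoid (algebra) axioms for `(A, η, μ)`. -/
def IsMonoid {A : C} (η : 𝟙_ C ⟶ A) (μ : A ⊗ A ⟶ A) : Prop :=
  (η ▷ A) ≫ μ = (λ_ A).hom ∧ (A ◁ η) ≫ μ = (ρ_ A).hom ∧
    (μ ▷ A) ≫ μ = (α_ A A A).hom ≫ (A ◁ μ) ≫ μ

/-- The compatibility condition
`(μ_A ⊗ V) ∘ (A ⊗ ψ) ∘ (ψ ⊗ A) = ψ ∘ (V ⊗ μ_A)`. -/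
def Compat {A V : C} (μ : A ⊗ A ⟶ A) (ψ : V ⊗ A ⟶ A ⊗ V) : Prop :=
  (ψ ▷ A) ≫ (α_ A V A).hom ≫ (A ◁ ψ) ≫ (α_ A A V).inv ≫ (μ ▷ V)
    = (α_ V A A).hom ≫ (V ◁ μ) ≫ ψ

/-- The idempotent `∇_{A⊗V} = (μ_A ⊗ V) ∘ (A ⊗ ψ) ∘ (A ⊗ V ⊗ η_A)`. -/
def nabla {A V : C} (η : 𝟙_ C ⟶ A) (μ : A ⊗ A ⟶ A) (ψ : V ⊗ A ⟶ A ⊗ V) :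
    A ⊗ V ⟶ A ⊗ V :=
  (ρ_ (A ⊗ V)).inv ≫ ((A ⊗ V) ◁ η) ≫ (α_ A V A).hom ≫ (A ◁ ψ) ≫
    (α_ A A V).inv ≫ (μ ▷ V)

/-- The twisted condition
`(μ_A ⊗ V) ∘ (A ⊗ ψ) ∘ (σ ⊗ A) = (μ_A ⊗ V) ∘ (A ⊗ σ) ∘ (ψ ⊗ V) ∘ (V ⊗ ψ)`. -/
def Twisted {A V : C} (μ : A ⊗ A ⟶ A) (ψ : V ⊗ A ⟶ A ⊗ V)
    (σ : V ⊗ V ⟶ A ⊗ V) : Prop :=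
  (σ ▷ A) ≫ (α_ A V A).hom ≫ (A ◁ ψ) ≫ (α_ A A V).inv ≫ (μ ▷ V)
    = (α_ V V A).hom ≫ (V ◁ ψ) ≫ (α_ V A V).inv ≫ (ψ ▷ V) ≫ (α_ A V V).hom ≫
        (A ◁ σ) ≫ (α_ A A V).inv ≫ (μ ▷ V)

/-- The cocycle condition
`(μ_A ⊗ V) ∘ (A ⊗ σ) ∘ (σ ⊗ V) = (μ_A ⊗ V) ∘ (A ⊗ σ) ∘ (ψ ⊗ V) ∘ (V ⊗ σ)`. -/
def Cocycle {A V : C} (μ : A ⊗ A ⟶ A) (ψ : V ⊗ A ⟶ A ⊗ V)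
    (σ : V ⊗ V ⟶ A ⊗ V) : Prop :=
  (σ ▷ V) ≫ (α_ A V V).hom ≫ (A ◁ σ) ≫ (α_ A A V).inv ≫ (μ ▷ V)
    = (α_ V V V).hom ≫ (V ◁ σ) ≫ (α_ V A V).inv ≫ (ψ ▷ V) ≫ (α_ A V V).hom ≫
        (A ◁ σ) ≫ (α_ A A V).inv ≫ (μ ▷ V)

/-- Normalization : `∇_{A⊗V} ∘ σ = σ`. -/
def Normalized {A V : C} (η : 𝟙_ C ⟶ A) (μ : A ⊗ A ⟶ A) (ψ : V ⊗ A ⟶ A ⊗ V)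
    (σ : V ⊗ V ⟶ A ⊗ V) : Prop :=
  σ ≫ nabla η μ ψ = σ

/-- `(ψ_V ⊗ W) ∘ (V ⊗ ψ_W) : (V ⊗ W) ⊗ A ⟶ A ⊗ (V ⊗ W)`. -/
def psi2 {A V W : C} (ψV : V ⊗ A ⟶ A ⊗ V) (ψW : W ⊗ A ⟶ A ⊗ W) :
    (V ⊗ W) ⊗ A ⟶ A ⊗ (V ⊗ W) :=
  (α_ V W A).hom ≫ (V ◁ ψW) ≫ (α_ V A W).inv ≫ (ψV ▷ W) ≫ (α_ A V W).hom

/-- `ψ_{V⊗W} = (ψ_V ⊗ W) ∘ (V ⊗ ψ_W) ∘ (Δ ⊗ A)`. -/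
def psiVW {A V W : C} (ψV : V ⊗ A ⟶ A ⊗ V) (ψW : W ⊗ A ⟶ A ⊗ W)
    (Δ : V ⊗ W ⟶ V ⊗ W) : (V ⊗ W) ⊗ A ⟶ A ⊗ (V ⊗ W) :=
  (Δ ▷ A) ≫ psi2 ψV ψW

/-- `Δ` is a link morphism:
`ψ_{V⊗W} = (A ⊗ Δ) ∘ ψ_{V⊗W}` and `ψ_{V⊗W} = ∇_{A⊗V⊗W} ∘ (ψ_V ⊗ W) ∘ (V ⊗ ψ_W)`. -/
def IsLink {A V W : C} (η : 𝟙_ C ⟶ A) (μ : A ⊗ A ⟶ A)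
    (ψV : V ⊗ A ⟶ A ⊗ V) (ψW : W ⊗ A ⟶ A ⊗ W) (Δ : V ⊗ W ⟶ V ⊗ W) : Prop :=
  psiVW ψV ψW Δ = psiVW ψV ψW Δ ≫ (A ◁ Δ) ∧
  psiVW ψV ψW Δ = psi2 ψV ψW ≫ nabla η μ (psiVW ψV ψW Δ)

/-- The final multiplication step `(μ_A ⊗ V ⊗ W)` on `A ⊗ ((A ⊗ V) ⊗ W)`. -/
def muPart (V W : C) {A : C} (μ : A ⊗ A ⟶ A) :
    A ⊗ ((A ⊗ V) ⊗ W) ⟶ A ⊗ (V ⊗ W) :=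
  (A ◁ (α_ A V W).hom) ≫ (α_ A A (V ⊗ W)).inv ≫ (μ ▷ (V ⊗ W))

/-- Condition (i) of the definition of a twisting morphism:
`(ψ_V ⊗ W) ∘ (V ⊗ ψ_W) ∘ (τ ⊗ A) = (A ⊗ τ) ∘ (ψ_W ⊗ V) ∘ (W ⊗ ψ_V)`. -/
def TwistI {A V W : C} (ψV : V ⊗ A ⟶ A ⊗ V) (ψW : W ⊗ A ⟶ A ⊗ W)
    (τ : W ⊗ V ⟶ V ⊗ W) : Prop :=
  (τ ▷ A) ≫ psi2 ψV ψW
    = (α_ W V A).hom ≫ (W ◁ ψV) ≫ (α_ W A V).inv ≫ (ψW ▷ V) ≫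
        (α_ A W V).hom ≫ (A ◁ τ)

/-- Condition (ii) of the definition of a twisting morphism. -/
def TwistII {A V W : C} (μ : A ⊗ A ⟶ A) (ψV : V ⊗ A ⟶ A ⊗ V)
    (σV : V ⊗ V ⟶ A ⊗ V) (ψW : W ⊗ A ⟶ A ⊗ W) (σW : W ⊗ W ⟶ A ⊗ W)
    (τ : W ⊗ V ⟶ V ⊗ W) : Prop :=
  ((τ ▷ W) ▷ V) ≫ ((α_ V W W).hom ▷ V) ≫ ((V ◁ σW) ▷ V) ≫
      ((α_ V A W).inv ▷ V) ≫ (α_ (V ⊗ A) W V).hom ≫ (ψV ⊗ₘ τ) ≫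
      (α_ A V (V ⊗ W)).hom ≫ (A ◁ (α_ V V W).inv) ≫ (A ◁ (σV ▷ W)) ≫ muPart V W μ
    = (α_ (W ⊗ V) W V).hom ≫ ((W ⊗ V) ◁ τ) ≫ (α_ W V (V ⊗ W)).hom ≫
        (W ◁ (α_ V V W).inv) ≫ (W ◁ (σV ▷ W)) ≫ (W ◁ (α_ A V W).hom) ≫
        (α_ W A (V ⊗ W)).inv ≫ (ψW ▷ (V ⊗ W)) ≫ (α_ A W (V ⊗ W)).hom ≫
        (A ◁ (α_ W V W).inv) ≫ (A ◁ (τ ▷ W)) ≫ (A ◁ (α_ V W W).hom) ≫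
        (A ◁ (V ◁ σW)) ≫ (A ◁ (α_ V A W).inv) ≫ (A ◁ (ψV ▷ W)) ≫ muPart V W μ

/-- `σ_{V⊗W} = (μ_A ⊗ V ⊗ W) ∘ (A ⊗ ψ_V ⊗ W) ∘ (σ_V ⊗ σ_W) ∘ (V ⊗ τ ⊗ W)`. -/
def sigmaVW {A V W : C} (μ : A ⊗ A ⟶ A) (ψV : V ⊗ A ⟶ A ⊗ V)
    (σV : V ⊗ V ⟶ A ⊗ V) (σW : W ⊗ W ⟶ A ⊗ W) (τ : W ⊗ V ⟶ V ⊗ W) :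
    (V ⊗ W) ⊗ (V ⊗ W) ⟶ A ⊗ (V ⊗ W) :=
  (α_ V W (V ⊗ W)).hom ≫ (V ◁ (α_ W V W).inv) ≫ (V ◁ (τ ▷ W)) ≫
    (V ◁ (α_ V W W).hom) ≫ (α_ V V (W ⊗ W)).inv ≫ (σV ⊗ₘ σW) ≫
    (α_ A V (A ⊗ W)).hom ≫ (A ◁ (α_ V A W).inv) ≫ (A ◁ (ψV ▷ W)) ≫ muPart V W μ

/-- The three σ-compatibility conditions for `σ_{V⊗W}` and a link morphism `Δ`. -/
def SigmaCompat {A V W : C} (Δ : V ⊗ W ⟶ V ⊗ W)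
    (σ : (V ⊗ W) ⊗ (V ⊗ W) ⟶ A ⊗ (V ⊗ W)) : Prop :=
  σ = (Δ ▷ (V ⊗ W)) ≫ σ ∧ σ = ((V ⊗ W) ◁ Δ) ≫ σ ∧ σ = σ ≫ (A ◁ Δ)

/-- The weak crossed product multiplication
`μ_{A⊗V} = (μ_A ⊗ V) ∘ (μ_A ⊗ σ) ∘ (A ⊗ ψ ⊗ V)`. -/
def wmul {A V : C} (μ : A ⊗ A ⟶ A) (ψ : V ⊗ A ⟶ A ⊗ V) (σ : V ⊗ V ⟶ A ⊗ V) :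
    (A ⊗ V) ⊗ (A ⊗ V) ⟶ A ⊗ V :=
  (α_ A V (A ⊗ V)).hom ≫ (A ◁ (α_ V A V).inv) ≫ (A ◁ (ψ ▷ V)) ≫
    (A ◁ (α_ A V V).hom) ≫ (α_ A A (V ⊗ V)).inv ≫ (μ ⊗ₘ σ) ≫
    (α_ A A V).inv ≫ (μ ▷ V)

/-- `β_ν = (μ_A ⊗ V) ∘ (A ⊗ ν)`. -/
def beta {A V : C} (μ : A ⊗ A ⟶ A) (ν : 𝟙_ C ⟶ A ⊗ V) : A ⟶ A ⊗ V :=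
  (ρ_ A).inv ≫ (A ◁ ν) ≫ (α_ A A V).inv ≫ (μ ▷ V)

/-- Preunit equation (1):
`(μ_A ⊗ V) ∘ (A ⊗ σ) ∘ (ψ ⊗ V) ∘ (V ⊗ ν) = ∇_{A⊗V} ∘ (η_A ⊗ V)`. -/
def PreEq1 {A V : C} (η : 𝟙_ C ⟶ A) (μ : A ⊗ A ⟶ A) (ψ : V ⊗ A ⟶ A ⊗ V)
    (σ : V ⊗ V ⟶ A ⊗ V) (ν : 𝟙_ C ⟶ A ⊗ V) : Prop :=
  (ρ_ V).inv ≫ (V ◁ ν) ≫ (α_ V A V).inv ≫ (ψ ▷ V) ≫ (α_ A V V).hom ≫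
      (A ◁ σ) ≫ (α_ A A V).inv ≫ (μ ▷ V)
    = (λ_ V).inv ≫ (η ▷ V) ≫ nabla η μ ψ

/-- Preunit equation (2):
`(μ_A ⊗ V) ∘ (A ⊗ σ) ∘ (ν ⊗ V) = ∇_{A⊗V} ∘ (η_A ⊗ V)`. -/
def PreEq2 {A V : C} (η : 𝟙_ C ⟶ A) (μ : A ⊗ A ⟶ A) (ψ : V ⊗ A ⟶ A ⊗ V)
    (σ : V ⊗ V ⟶ A ⊗ V) (ν : 𝟙_ C ⟶ A ⊗ V) : Prop :=
  (λ_ V).inv ≫ (ν ▷ V) ≫ (α_ A V V).hom ≫ (A ◁ σ) ≫ (α_ A A V).inv ≫ (μ ▷ V)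
    = (λ_ V).inv ≫ (η ▷ V) ≫ nabla η μ ψ

/-- Preunit equation (3):
`(μ_A ⊗ V) ∘ (A ⊗ ψ) ∘ (ν ⊗ A) = β_ν`. -/
def PreEq3 {A V : C} (μ : A ⊗ A ⟶ A) (ψ : V ⊗ A ⟶ A ⊗ V)
    (ν : 𝟙_ C ⟶ A ⊗ V) : Prop :=
  (λ_ A).inv ≫ (ν ▷ A) ≫ (α_ A V A).hom ≫ (A ◁ ψ) ≫ (α_ A A V).inv ≫ (μ ▷ V)
    = beta μ ν

/-- `ν` is a preunit for the associative product `m` :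
`m ∘ (X ⊗ ν) = m ∘ (ν ⊗ X) = m ∘ (X ⊗ (m ∘ (ν ⊗ₘ ν)))`. -/
def IsPreunit {X : C} (m : X ⊗ X ⟶ X) (ν : 𝟙_ C ⟶ X) : Prop :=
  (ρ_ X).inv ≫ (X ◁ ν) ≫ m = (λ_ X).inv ≫ (ν ▷ X) ≫ m ∧
  (λ_ X).inv ≫ (ν ▷ X) ≫ m
    = (ρ_ X).inv ≫ (X ◁ ((λ_ (𝟙_ C)).inv ≫ (ν ⊗ₘ ν) ≫ m)) ≫ m

/-- `ν_{V⊗W} = ∇_{A⊗V⊗W} ∘ (μ_A ⊗ V ⊗ W) ∘ (A ⊗ ψ_V ⊗ W) ∘ (ν_V ⊗ ν_W)`. -/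
def nuVW {A V W : C} (η : 𝟙_ C ⟶ A) (μ : A ⊗ A ⟶ A) (ψV : V ⊗ A ⟶ A ⊗ V)
    (ψW : W ⊗ A ⟶ A ⊗ W) (Δ : V ⊗ W ⟶ V ⊗ W)
    (νV : 𝟙_ C ⟶ A ⊗ V) (νW : 𝟙_ C ⟶ A ⊗ W) : 𝟙_ C ⟶ A ⊗ (V ⊗ W) :=
  (λ_ (𝟙_ C)).inv ≫ (νV ⊗ₘ νW) ≫ (α_ A V (A ⊗ W)).hom ≫ (A ◁ (α_ V A W).inv) ≫
    (A ◁ (ψV ▷ W)) ≫ muPart V W μ ≫ nabla η μ (psiVW ψV ψW Δ)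

/-- Iterated preunit condition (pre-1):
`(μ_A⊗V⊗W)∘(A⊗σ_V⊗W)∘(ψ_V⊗τ)∘(V⊗ψ_W⊗V)∘(Δ⊗ν_V) = ∇_{A⊗V⊗W}∘(η_A⊗V⊗W)`. -/
def IterPre1 {A V W : C} (η : 𝟙_ C ⟶ A) (μ : A ⊗ A ⟶ A)
    (ψV : V ⊗ A ⟶ A ⊗ V) (σV : V ⊗ V ⟶ A ⊗ V) (ψW : W ⊗ A ⟶ A ⊗ W)
    (τ : W ⊗ V ⟶ V ⊗ W) (Δ : V ⊗ W ⟶ V ⊗ W) (νV : 𝟙_ C ⟶ A ⊗ V) : Prop :=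
  (ρ_ (V ⊗ W)).inv ≫ (Δ ⊗ₘ νV) ≫ (α_ V W (A ⊗ V)).hom ≫ (V ◁ (α_ W A V).inv) ≫
      (V ◁ (ψW ▷ V)) ≫ (V ◁ (α_ A W V).hom) ≫ (α_ V A (W ⊗ V)).inv ≫ (ψV ⊗ₘ τ) ≫
      (α_ A V (V ⊗ W)).hom ≫ (A ◁ (α_ V V W).inv) ≫ (A ◁ (σV ▷ W)) ≫ muPart V W μ
    = (λ_ (V ⊗ W)).inv ≫ (η ▷ (V ⊗ W)) ≫ nabla η μ (psiVW ψV ψW Δ)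

/-- Iterated preunit condition (pre-2):
`(μ_A⊗V⊗W)∘(A⊗ψ_V⊗W)∘(A⊗V⊗σ_W)∘(A⊗τ⊗W)∘(ν_W⊗V⊗W) = ∇_{A⊗V⊗W}∘(η_A⊗V⊗W)`. -/
def IterPre2 {A V W : C} (η : 𝟙_ C ⟶ A) (μ : A ⊗ A ⟶ A)
    (ψV : V ⊗ A ⟶ A ⊗ V) (ψW : W ⊗ A ⟶ A ⊗ W) (σW : W ⊗ W ⟶ A ⊗ W)
    (τ : W ⊗ V ⟶ V ⊗ W) (Δ : V ⊗ W ⟶ V ⊗ W) (νW : 𝟙_ C ⟶ A ⊗ W) : Prop :=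
  (λ_ (V ⊗ W)).inv ≫ (νW ▷ (V ⊗ W)) ≫ (α_ A W (V ⊗ W)).hom ≫
      (A ◁ (α_ W V W).inv) ≫ (A ◁ (τ ▷ W)) ≫ (A ◁ (α_ V W W).hom) ≫
      (A ◁ (V ◁ σW)) ≫ (A ◁ (α_ V A W).inv) ≫ (A ◁ (ψV ▷ W)) ≫ muPart V W μ
    = (λ_ (V ⊗ W)).inv ≫ (η ▷ (V ⊗ W)) ≫ nabla η μ (psiVW ψV ψW Δ)

/-- `i_{A×V} = p_{A⊗V⊗W} ∘ (μ_A⊗V⊗W) ∘ (A⊗ψ_V⊗W) ∘ (i_{A⊗V} ⊗ ν_W)`. -/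
def iAV {A V W X Z : C} (μ : A ⊗ A ⟶ A) (ψV : V ⊗ A ⟶ A ⊗ V)
    (νW : 𝟙_ C ⟶ A ⊗ W) (iX : X ⟶ A ⊗ V) (p2 : A ⊗ (V ⊗ W) ⟶ Z) : X ⟶ Z :=
  (ρ_ X).inv ≫ (iX ⊗ₘ νW) ≫ (α_ A V (A ⊗ W)).hom ≫ (A ◁ (α_ V A W).inv) ≫
    (A ◁ (ψV ▷ W)) ≫ muPart V W μ ≫ p2

/-- `i_W = p_{A⊗V⊗W} ∘ (ν_V ⊗ W)`. -/
def iWmor {A V W Z : C} (νV : 𝟙_ C ⟶ A ⊗ V) (p2 : A ⊗ (V ⊗ W) ⟶ Z) : W ⟶ Z :=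
  (λ_ W).inv ≫ (νV ▷ W) ≫ (α_ A V W).hom ≫ p2

/-- `∇_{(A×V)⊗W} = (p_{A⊗V} ⊗ W) ∘ ∇_{A⊗V⊗W} ∘ (i_{A⊗V} ⊗ W)`. -/
def nabPrime {A V W X : C} (η : 𝟙_ C ⟶ A) (μ : A ⊗ A ⟶ A)
    (ψV : V ⊗ A ⟶ A ⊗ V) (ψW : W ⊗ A ⟶ A ⊗ W) (Δ : V ⊗ W ⟶ V ⊗ W)
    (iX : X ⟶ A ⊗ V) (pX : A ⊗ V ⟶ X) : X ⊗ W ⟶ X ⊗ W :=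
  (iX ▷ W) ≫ (α_ A V W).hom ≫ nabla η μ (psiVW ψV ψW Δ) ≫
    (α_ A V W).inv ≫ (pX ▷ W)

/-- Equality (new-it-1). -/
def NewIt1 {A V W : C} (η : 𝟙_ C ⟶ A) (μ : A ⊗ A ⟶ A)
    (ψV : V ⊗ A ⟶ A ⊗ V) (σV : V ⊗ V ⟶ A ⊗ V) (ψW : W ⊗ A ⟶ A ⊗ W)
    (τ : W ⊗ V ⟶ V ⊗ W) (Δ : V ⊗ W ⟶ V ⊗ W) (νW : 𝟙_ C ⟶ A ⊗ W) : Prop :=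
  (ρ_ (V ⊗ V)).inv ≫ ((V ⊗ V) ◁ νW) ≫ (α_ (V ⊗ V) A W).inv ≫
      (((σV ▷ A) ≫ (α_ A V A).hom ≫ (A ◁ ψV) ≫ (α_ A A V).inv ≫ (μ ▷ V)) ▷ W) ≫
      (α_ A V W).hom ≫ nabla η μ (psiVW ψV ψW Δ)
    = ((ρ_ V).inv ▷ V) ≫ ((V ◁ νW) ▷ V) ≫ ((α_ V A W).inv ▷ V) ≫
        (α_ (V ⊗ A) W V).hom ≫ (ψV ⊗ₘ τ) ≫ (α_ A V (V ⊗ W)).hom ≫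
        (A ◁ (α_ V V W).inv) ≫ (A ◁ (σV ▷ W)) ≫ muPart V W μ ≫
        nabla η μ (psiVW ψV ψW Δ)

/-- Equality (new-it-2). -/
def NewIt2 {A V W : C} (η : 𝟙_ C ⟶ A) (μ : A ⊗ A ⟶ A)
    (ψV : V ⊗ A ⟶ A ⊗ V) (σV : V ⊗ V ⟶ A ⊗ V) (ψW : W ⊗ A ⟶ A ⊗ W)
    (Δ : V ⊗ W ⟶ V ⊗ W) : Prop :=
  (σV ▷ W) ≫ (α_ A V W).hom ≫ nabla η μ (psiVW ψV ψW Δ)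
    = (α_ V V W).hom ≫ (V ◁ Δ) ≫ (ρ_ (V ⊗ (V ⊗ W))).inv ≫
        ((V ⊗ (V ⊗ W)) ◁ η) ≫ (α_ V (V ⊗ W) A).hom ≫ (V ◁ (α_ V W A).hom) ≫
        (α_ V V (W ⊗ A)).inv ≫ (σV ⊗ₘ ψW) ≫ (α_ A V (A ⊗ W)).hom ≫
        (A ◁ (α_ V A W).inv) ≫ (A ◁ (ψV ▷ W)) ≫ muPart V W μ

/-- Equality (new-it-3). -/
def NewIt3 {A V W : C} (η : 𝟙_ C ⟶ A) (μ : A ⊗ A ⟶ A)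
    (ψV : V ⊗ A ⟶ A ⊗ V) (ψW : W ⊗ A ⟶ A ⊗ W) (σW : W ⊗ W ⟶ A ⊗ W)
    (Δ : V ⊗ W ⟶ V ⊗ W) : Prop :=
  (V ◁ σW) ≫ (α_ V A W).inv ≫ (ψV ▷ W) ≫ (α_ A V W).hom ≫
      nabla η μ (psiVW ψV ψW Δ)
    = (α_ V W W).inv ≫ (Δ ▷ W) ≫ (α_ V W W).hom ≫ (V ◁ σW) ≫
        (α_ V A W).inv ≫ (ψV ▷ W) ≫ (α_ A V W).hom

/-- A weak distributive law of the monoid `S` over the monoid `T`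
(`lam : T ⊗ S ⟶ S ⊗ T`). -/
def WDL {T S : C} (ηT : 𝟙_ C ⟶ T) (μT : T ⊗ T ⟶ T) (ηS : 𝟙_ C ⟶ S)
    (μS : S ⊗ S ⟶ S) (lam : T ⊗ S ⟶ S ⊗ T) : Prop :=
  ((μT ▷ S) ≫ lam
      = (α_ T T S).hom ≫ (T ◁ lam) ≫ (α_ T S T).inv ≫ (lam ▷ T) ≫
          (α_ S T T).hom ≫ (S ◁ μT)) ∧
  ((T ◁ μS) ≫ lam
      = (α_ T S S).inv ≫ (lam ▷ S) ≫ (α_ S T S).hom ≫ (S ◁ lam) ≫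
          (α_ S S T).inv ≫ (μS ▷ T)) ∧
  ((((λ_ S).inv ≫ (ηT ▷ S) ≫ lam) ▷ T) ≫ (α_ S T T).hom ≫ (S ◁ μT)
      = (S ◁ ((ρ_ T).inv ≫ (T ◁ ηS) ≫ lam)) ≫ (α_ S S T).inv ≫ (μS ▷ T))

/-- The Yang–Baxter relation
`(S⊗λ2)∘(λ3⊗T)∘(D⊗λ1) = (λ1⊗D)∘(T⊗λ3)∘(λ2⊗S)`. -/
def YB {S T D : C} (l1 : T ⊗ S ⟶ S ⊗ T) (l2 : D ⊗ T ⟶ T ⊗ D)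
    (l3 : D ⊗ S ⟶ S ⊗ D) : Prop :=
  (α_ D T S).hom ≫ (D ◁ l1) ≫ (α_ D S T).inv ≫ (l3 ▷ T) ≫
      (α_ S D T).hom ≫ (S ◁ l2)
    = (l2 ▷ S) ≫ (α_ T D S).hom ≫ (T ◁ l3) ≫ (α_ T S D).inv ≫
        (l1 ▷ D) ≫ (α_ S T D).hom

/-- `σ_T = (S ⊗ μ_T) ∘ ((λ ∘ (T ⊗ η_S)) ⊗ T)`. -/
def sigWDL {S T : C} (ηS : 𝟙_ C ⟶ S) (μT : T ⊗ T ⟶ T)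
    (lam : T ⊗ S ⟶ S ⊗ T) : T ⊗ T ⟶ S ⊗ T :=
  (((ρ_ T).inv ≫ (T ◁ ηS) ≫ lam) ▷ T) ≫ (α_ S T T).hom ≫ (S ◁ μT)

/-- `∇_{S⊗T} = (μ_S ⊗ T) ∘ (S ⊗ (λ ∘ (T ⊗ η_S)))`. -/
def nabWDL {S T : C} (ηS : 𝟙_ C ⟶ S) (μS : S ⊗ S ⟶ S)
    (lam : T ⊗ S ⟶ S ⊗ T) : S ⊗ T ⟶ S ⊗ T :=
  (S ◁ ((ρ_ T).inv ≫ (T ◁ ηS) ≫ lam)) ≫ (α_ S S T).inv ≫ (μS ▷ T)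


section Helpers
variable {A : C} {η : 𝟙_ C ⟶ A} {μ : A ⊗ A ⟶ A}

theorem insR {X Y : C} (f : X ⟶ Y) (η : 𝟙_ C ⟶ A) :
    (ρ_ X).inv ≫ (X ◁ η) ≫ (f ▷ A) = f ≫ (ρ_ Y).inv ≫ (Y ◁ η) := by
  rw [whisker_exchange, ← rightUnitor_inv_naturality_assoc]

theorem insL {X Y : C} (f : X ⟶ Y) (η : 𝟙_ C ⟶ A) :
    (λ_ X).inv ≫ (η ▷ X) ≫ (A ◁ f) = f ≫ (λ_ Y).inv ≫ (η ▷ Y) := by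
  rw [← whisker_exchange, ← leftUnitor_inv_naturality_assoc]

theorem mulL (hA : IsMonoid η μ) {X Y : C} (f : X ⟶ A ⊗ Y) :
    (λ_ X).inv ≫ (η ▷ X) ≫ (A ◁ f) ≫ (α_ A A Y).inv ≫ (μ ▷ Y) = f := by
  slice_lhs 2 3 => rw [← whisker_exchange]
  slice_lhs 3 4 => rw [associator_inv_naturality_left]
  slice_lhs 4 5 => rw [← comp_whiskerRight, hA.1]
  rw [← leftUnitor_inv_naturality_assoc]
  monoidal

theorem mulR (hA : IsMonoid η μ) {X Y : C} (f : X ⟶ Y ⊗ A) :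
    (ρ_ X).inv ≫ (X ◁ η) ≫ (f ▷ A) ≫ (α_ Y A A).hom ≫ (Y ◁ μ) = f := by
  slice_lhs 2 3 => rw [whisker_exchange]
  slice_lhs 3 4 => rw [associator_naturality_right]
  slice_lhs 4 5 => rw [← MonoidalCategory.whiskerLeft_comp, hA.2.1]
  rw [← rightUnitor_inv_naturality_assoc]
  monoidal

end Helpers

section WDLLemmas
variable {B A : C} {ηB : 𝟙_ C ⟶ B} {μB : B ⊗ B ⟶ B} {ηA : 𝟙_ C ⟶ A}
  {μA : A ⊗ A ⟶ A} {l : B ⊗ A ⟶ A ⊗ B}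

def rmap (ηA : 𝟙_ C ⟶ A) (l : B ⊗ A ⟶ A ⊗ B) : B ⟶ A ⊗ B :=
  (ρ_ B).inv ≫ (B ◁ ηA) ≫ l

def emap (ηB : 𝟙_ C ⟶ B) (l : B ⊗ A ⟶ A ⊗ B) : A ⟶ A ⊗ B :=
  (λ_ A).inv ≫ (ηB ▷ A) ≫ l

theorem nab_eq_r : nabWDL ηA μA l = (A ◁ rmap ηA l) ≫ (α_ A A B).inv ≫ (μA ▷ B) := rfl

theorem nab_eq_e (hl : WDL ηB μB ηA μA l) :
    nabWDL ηA μA l = (emap ηB l ▷ B) ≫ (α_ A B B).hom ≫ (A ◁ μB) :=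
  hl.2.2.symm

/-- `l ∘ ∇ = l`  (post-composition absorption). -/
theorem nab_absorb (hA : IsMonoid ηA μA) (hl : WDL ηB μB ηA μA l) :
    l ≫ nabWDL ηA μA l = l := by
  calc l ≫ nabWDL ηA μA l
      = (ρ_ (B ⊗ A)).inv ≫ ((B ⊗ A) ◁ ηA) ≫ (l ▷ A) ≫ (α_ A B A).hom ≫
          (A ◁ l) ≫ (α_ A A B).inv ≫ (μA ▷ B) := by
        slice_rhs 1 3 => rw [insR]
        simp only [nabWDL, Category.assoc]
        congr 1
        monoidal
    _ = (ρ_ (B ⊗ A)).inv ≫ ((B ⊗ A) ◁ ηA) ≫ (α_ B A A).hom ≫ (B ◁ μA) ≫ l := by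
        rw [hl.2.1]; monoidal
    _ = l := by
        slice_lhs 2 3 => rw [associator_naturality_right]
        slice_lhs 3 4 => rw [← MonoidalCategory.whiskerLeft_comp, hA.2.1]
        monoidal

/-- `r ∘ μB = (A ⊗ μB) ∘ (l ⊗ B) ∘ (B ⊗ r)`  (from (a) + unit). -/
theorem r_mul (hl : WDL ηB μB ηA μA l) :
    μB ≫ rmap ηA l
      = (B ◁ rmap ηA l) ≫ (α_ B A B).inv ≫ (l ▷ B) ≫ (α_ A B B).hom ≫
          (A ◁ μB) := by
  calc μB ≫ rmap ηA l
      = (ρ_ (B ⊗ B)).inv ≫ ((B ⊗ B) ◁ ηA) ≫ (μB ▷ A) ≫ l := by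
        rw [rmap]
        slice_rhs 1 3 => rw [insR]
        simp only [Category.assoc]
    _ = (ρ_ (B ⊗ B)).inv ≫ ((B ⊗ B) ◁ ηA) ≫ (α_ B B A).hom ≫ (B ◁ l) ≫
          (α_ B A B).inv ≫ (l ▷ B) ≫ (α_ A B B).hom ≫ (A ◁ μB) := by
        rw [hl.1]
    _ = _ := by
        slice_lhs 2 3 => rw [associator_naturality_right]
        simp only [rmap, MonoidalCategory.whiskerLeft_comp, Category.assoc]
        monoidal

/-- `e ∘ μA = (μA ⊗ B) ∘ (A ⊗ l) ∘ (e ⊗ A)`  (from (b) + unit). -/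
theorem e_mul (hA : IsMonoid ηA μA) (hl : WDL ηB μB ηA μA l) :
    μA ≫ emap ηB l
      = (emap ηB l ▷ A) ≫ (α_ A B A).hom ≫ (A ◁ l) ≫ (α_ A A B).inv ≫
          (μA ▷ B) := by
  calc μA ≫ emap ηB l
      = (λ_ (A ⊗ A)).inv ≫ (ηB ▷ (A ⊗ A)) ≫ (B ◁ μA) ≫ l := by
        rw [emap]
        slice_rhs 1 3 => rw [insL]
        simp only [Category.assoc]
    _ = (λ_ (A ⊗ A)).inv ≫ (ηB ▷ (A ⊗ A)) ≫ (α_ B A A).inv ≫ (l ▷ A) ≫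
          (α_ A B A).hom ≫ (A ◁ l) ≫ (α_ A A B).inv ≫ (μA ▷ B) := by
        rw [hl.2.1]
    _ = _ := by
        slice_lhs 2 3 => rw [associator_inv_naturality_left]
        simp only [emap, comp_whiskerRight, Category.assoc]
        monoidal

end WDLLemmas

theorem nabla_eq {A V : C} (η : 𝟙_ C ⟶ A) (μ : A ⊗ A ⟶ A)
    (ψ : V ⊗ A ⟶ A ⊗ V) :
    nabla η μ ψ
      = (A ◁ ((ρ_ V).inv ≫ (V ◁ η) ≫ ψ)) ≫ (α_ A A V).inv ≫ (μ ▷ V) := by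
  simp only [nabla, MonoidalCategory.whiskerLeft_comp, Category.assoc]
  monoidal

section Concrete
variable {S T D : C} {ηS : 𝟙_ C ⟶ S} {μS : S ⊗ S ⟶ S} {ηT : 𝟙_ C ⟶ T}
  {μT : T ⊗ T ⟶ T} {ηD : 𝟙_ C ⟶ D} {μD : D ⊗ D ⟶ D}
  {l1 : T ⊗ S ⟶ S ⊗ T} {l2 : D ⊗ T ⟶ T ⊗ D} {l3 : D ⊗ S ⟶ S ⊗ D}

/-- the Yang-Baxter relation, with `ηS` inserted in the `S`-strand. -/
theorem YB2 (hyb : YB l1 l2 l3) :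
    l2 ≫ (T ◁ rmap ηS l3) ≫ (α_ T S D).inv ≫ (l1 ▷ D) ≫ (α_ S T D).hom
      = (D ◁ rmap ηS l1) ≫ (α_ D S T).inv ≫ (l3 ▷ T) ≫ (α_ S D T).hom ≫
          (S ◁ l2) := by
  calc l2 ≫ (T ◁ rmap ηS l3) ≫ (α_ T S D).inv ≫ (l1 ▷ D) ≫ (α_ S T D).hom
      = (ρ_ (D ⊗ T)).inv ≫ ((D ⊗ T) ◁ ηS) ≫ ((l2 ▷ S) ≫ (α_ T D S).hom ≫
          (T ◁ l3) ≫ (α_ T S D).inv ≫ (l1 ▷ D) ≫ (α_ S T D).hom) := by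
        slice_rhs 1 3 => rw [insR]
        simp only [rmap, MonoidalCategory.whiskerLeft_comp, Category.assoc]
        congr 1
        monoidal
    _ = _ := by
        rw [← hyb]
        simp only [rmap, MonoidalCategory.whiskerLeft_comp, Category.assoc]
        monoidal

theorem nuT_eq (hS : IsMonoid ηS μS) :
    (λ_ (𝟙_ C)).inv ≫ (ηS ⊗ₘ ηT) ≫ nabWDL ηS μS l1 = ηT ≫ rmap ηS l1 := by
  rw [nab_eq_r, MonoidalCategory.tensorHom_def]
  simp only [Category.assoc]
  slice_lhs 3 4 => rw [← MonoidalCategory.whiskerLeft_comp]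
  simp only [Category.assoc]
  exact mulL hS _

theorem nuD_eq (hS : IsMonoid ηS μS) :
    (λ_ (𝟙_ C)).inv ≫ (ηS ⊗ₘ ηD) ≫ nabWDL ηS μS l3 = ηD ≫ rmap ηS l3 := by
  rw [nab_eq_r, MonoidalCategory.tensorHom_def]
  simp only [Category.assoc]
  slice_lhs 3 4 => rw [← MonoidalCategory.whiskerLeft_comp]
  simp only [Category.assoc]
  exact mulL hS _

theorem nuD_eq2 (hD : IsMonoid ηD μD) (h3 : WDL ηD μD ηS μS l3) :
    (λ_ (𝟙_ C)).inv ≫ (ηS ⊗ₘ ηD) ≫ nabWDL ηS μS l3 = ηS ≫ emap ηD l3 := by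
  rw [nab_eq_e h3]
  have h := mulR hD (ηS ≫ emap ηD l3)
  rw [← h, tensorHom_def']
  simp only [comp_whiskerRight, Category.assoc]
  monoidal

theorem r_absorb (hT : IsMonoid ηT μT) (h2 : WDL ηD μD ηT μT l2) :
    rmap ηT l2 ≫ nabWDL ηT μT l2 = rmap ηT l2 := by
  rw [rmap]; simp only [Category.assoc]; rw [nab_absorb hT h2]

theorem mu_nab2 (hT : IsMonoid ηT μT) :
    (μT ▷ D) ≫ nabWDL ηT μT l2
      = (α_ T T D).hom ≫ (T ◁ nabWDL ηT μT l2) ≫ (α_ T T D).inv ≫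
          (μT ▷ D) := by
  rw [nab_eq_r]
  slice_lhs 1 2 => rw [← whisker_exchange]
  slice_lhs 2 3 => rw [associator_inv_naturality_left]
  slice_lhs 3 4 => rw [← comp_whiskerRight, hT.2.2]
  simp only [comp_whiskerRight, MonoidalCategory.whiskerLeft_comp,
    Category.assoc]
  monoidal

theorem nab2_idem (hT : IsMonoid ηT μT) (h2 : WDL ηD μD ηT μT l2) :
    nabWDL ηT μT l2 ≫ nabWDL ηT μT l2 = nabWDL ηT μT l2 := by
  nth_rewrite 1 [nab_eq_r]
  simp only [Category.assoc]
  rw [mu_nab2 hT]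
  simp only [Iso.inv_hom_id_assoc]
  rw [← MonoidalCategory.whiskerLeft_comp_assoc, r_absorb hT h2, ← nab_eq_r]

/-- `r3 = (S ⊗ μD) ∘ (ν_D ⊗ D)`. -/
theorem r3_nu (hS : IsMonoid ηS μS) (h3 : WDL ηD μD ηS μS l3) :
    rmap ηS l3 = (λ_ D).inv ≫ ((ηS ≫ emap ηD l3) ▷ D) ≫ (α_ S D D).hom ≫
        (S ◁ μD) := by
  conv_lhs => rw [← mulL hS (rmap ηS l3)]
  rw [← nab_eq_r, nab_eq_e h3]
  simp only [comp_whiskerRight, Category.assoc]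

/-- `r3 ∘ μD = (S ⊗ μD) ∘ (r3 ⊗ D)`. -/
theorem Bkey (hS : IsMonoid ηS μS) (hD : IsMonoid ηD μD)
    (h3 : WDL ηD μD ηS μS l3) :
    μD ≫ rmap ηS l3
      = (rmap ηS l3 ▷ D) ≫ (α_ S D D).hom ≫ (S ◁ μD) := by
  calc μD ≫ rmap ηS l3
      = (λ_ (D ⊗ D)).inv ≫ ((ηS ≫ emap ηD l3) ▷ (D ⊗ D)) ≫
          (α_ S D (D ⊗ D)).hom ≫ (S ◁ ((D ◁ μD) ≫ μD)) := by
        rw [r3_nu hS h3, leftUnitor_inv_naturality_assoc]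
        slice_lhs 2 3 => rw [whisker_exchange]
        slice_lhs 3 4 => rw [associator_naturality_right]
        simp only [MonoidalCategory.whiskerLeft_comp, Category.assoc]
    _ = (λ_ (D ⊗ D)).inv ≫ ((ηS ≫ emap ηD l3) ▷ (D ⊗ D)) ≫
          (α_ S D (D ⊗ D)).hom ≫
          (S ◁ ((α_ D D D).inv ≫ (μD ▷ D) ≫ μD)) := by
        rw [hD.2.2]; simp only [Iso.inv_hom_id_assoc]
    _ = (rmap ηS l3 ▷ D) ≫ (α_ S D D).hom ≫ (S ◁ μD) := by
        rw [r3_nu hS h3]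
        simp only [comp_whiskerRight, MonoidalCategory.whiskerLeft_comp,
          Category.assoc]
        slice_rhs 5 6 => rw [associator_naturality_middle]
        simp only [Category.assoc]
        monoidal

/-- the common right-hand side `ψ' = ψ_{T⊗D} ∘ (T⊗D⊗ηS)`. -/
theorem psiTD_unit :
    (ρ_ (T ⊗ D)).inv ≫ ((T ⊗ D) ◁ ηS) ≫ psiVW l1 l3 (nabWDL ηT μT l2)
      = nabWDL ηT μT l2 ≫ (T ◁ rmap ηS l3) ≫ (α_ T S D).inv ≫ (l1 ▷ D) ≫
          (α_ S T D).hom := by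
  simp only [psiVW, psi2]
  slice_lhs 1 3 => rw [insR]
  simp only [Category.assoc]
  congr 1
  simp only [rmap, MonoidalCategory.whiskerLeft_comp, Category.assoc]
  monoidal

theorem RHScommon (hS : IsMonoid ηS μS) :
    (λ_ (T ⊗ D)).inv ≫ (ηS ▷ (T ⊗ D)) ≫
        nabla ηS μS (psiVW l1 l3 (nabWDL ηT μT l2))
      = nabWDL ηT μT l2 ≫ (T ◁ rmap ηS l3) ≫ (α_ T S D).inv ≫ (l1 ▷ D) ≫
          (α_ S T D).hom := by
  rw [nabla_eq]
  have h := mulL hS ((ρ_ (T ⊗ D)).inv ≫ ((T ⊗ D) ◁ ηS) ≫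
    psiVW l1 l3 (nabWDL ηT μT l2))
  rw [h, psiTD_unit]

/-- `M = M1` : the two forms of the `M` morphism, via Yang–Baxter. -/
theorem Mlem (hyb : YB l1 l2 l3) :
    emap ηD l2 ≫ (T ◁ rmap ηS l3) ≫ (α_ T S D).inv ≫ (l1 ▷ D) ≫
        (α_ S T D).hom
      = rmap ηS l1 ≫ (emap ηD l3 ▷ T) ≫ (α_ S D T).hom ≫ (S ◁ l2) := by
  simp only [emap, Category.assoc]
  rw [YB2 hyb]
  slice_lhs 2 3 => rw [← whisker_exchange]
  simp only [Category.assoc]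
  rw [← leftUnitor_inv_naturality_assoc]
  congr 1
  simp only [comp_whiskerRight, Category.assoc]
  monoidal

/-- RHS of pre-2, as `(μS⊗T⊗μD)∘(M ⊗ D)`. -/
theorem goal2_rhs (hS : IsMonoid ηS μS) (hD : IsMonoid ηD μD)
    (h2 : WDL ηD μD ηT μT l2) (h3 : WDL ηD μD ηS μS l3) :
    nabWDL ηT μT l2 ≫ (T ◁ rmap ηS l3) ≫ (α_ T S D).inv ≫ (l1 ▷ D) ≫
        (α_ S T D).hom
      = ((emap ηD l2 ≫ (T ◁ rmap ηS l3) ≫ (α_ T S D).inv ≫ (l1 ▷ D) ≫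
          (α_ S T D).hom) ▷ D) ≫ (α_ S (T ⊗ D) D).hom ≫
          (S ◁ ((α_ T D D).hom ≫ (T ◁ μD))) := by
  rw [nab_eq_e h2]
  simp only [Category.assoc]
  rw [← MonoidalCategory.whiskerLeft_comp_assoc, Bkey hS hD h3]
  simp only [comp_whiskerRight, MonoidalCategory.whiskerLeft_comp,
    Category.assoc]
  slice_lhs 5 6 => rw [associator_inv_naturality_right]
  slice_lhs 6 7 => rw [whisker_exchange]
  simp only [Category.assoc]
  monoidal

theorem e3_merge (hS : IsMonoid ηS μS) (h3 : WDL ηD μD ηS μS l3) :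
    (λ_ S).inv ≫ ((ηS ≫ emap ηD l3) ▷ S) ≫ (α_ S D S).hom ≫ (S ◁ l3) ≫
        (α_ S S D).inv ≫ (μS ▷ D)
      = emap ηD l3 := by
  simp only [comp_whiskerRight, Category.assoc]
  rw [← e_mul hS h3]
  slice_lhs 2 3 => rw [hS.1]
  simp only [Iso.inv_hom_id_assoc]

theorem e3_merge_ctx (X : C) (hS : IsMonoid ηS μS)
    (h3 : WDL ηD μD ηS μS l3) :
    (λ_ (S ⊗ X)).inv ≫ ((ηS ≫ emap ηD l3) ▷ (S ⊗ X)) ≫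
        (α_ S D (S ⊗ X)).hom ≫ (S ◁ (α_ D S X).inv) ≫ (S ◁ (l3 ▷ X)) ≫
        (S ◁ (α_ S D X).hom) ≫ (α_ S S (D ⊗ X)).inv ≫ (μS ▷ (D ⊗ X))
      = (emap ηD l3 ▷ X) ≫ (α_ S D X).hom := by
  calc (λ_ (S ⊗ X)).inv ≫ ((ηS ≫ emap ηD l3) ▷ (S ⊗ X)) ≫
        (α_ S D (S ⊗ X)).hom ≫ (S ◁ (α_ D S X).inv) ≫ (S ◁ (l3 ▷ X)) ≫
        (S ◁ (α_ S D X).hom) ≫ (α_ S S (D ⊗ X)).inv ≫ (μS ▷ (D ⊗ X))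
      = (((λ_ S).inv ≫ ((ηS ≫ emap ηD l3) ▷ S) ≫ (α_ S D S).hom ≫
          (S ◁ l3) ≫ (α_ S S D).inv ≫ (μS ▷ D)) ▷ X) ≫ (α_ S D X).hom := by
        simp only [comp_whiskerRight, MonoidalCategory.whiskerLeft_comp,
          Category.assoc]
        monoidal
    _ = _ := by rw [e3_merge hS h3]

/-- the inner chain of pre-2-LHS, after Yang–Baxter. -/
theorem inner2 (hyb : YB l1 l2 l3) :
    (l2 ▷ D) ≫ (α_ T D D).hom ≫
        (T ◁ ((rmap ηS l3 ▷ D) ≫ (α_ S D D).hom ≫ (S ◁ μD))) ≫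
        (α_ T S D).inv ≫ (l1 ▷ D) ≫ (α_ S T D).hom
      = (((D ◁ rmap ηS l1) ≫ (α_ D S T).inv ≫ (l3 ▷ T) ≫ (α_ S D T).hom ≫
          (S ◁ l2)) ▷ D) ≫ (α_ S (T ⊗ D) D).hom ≫
          (S ◁ ((α_ T D D).hom ≫ (T ◁ μD))) := by
  calc (l2 ▷ D) ≫ (α_ T D D).hom ≫
        (T ◁ ((rmap ηS l3 ▷ D) ≫ (α_ S D D).hom ≫ (S ◁ μD))) ≫
        (α_ T S D).inv ≫ (l1 ▷ D) ≫ (α_ S T D).hom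
      = ((l2 ≫ (T ◁ rmap ηS l3) ≫ (α_ T S D).inv ≫ (l1 ▷ D) ≫
          (α_ S T D).hom) ▷ D) ≫ (α_ S (T ⊗ D) D).hom ≫
          (S ◁ ((α_ T D D).hom ≫ (T ◁ μD))) := by
        simp only [comp_whiskerRight, MonoidalCategory.whiskerLeft_comp,
          Category.assoc]
        slice_lhs 5 6 => rw [associator_inv_naturality_right]
        slice_lhs 6 7 => rw [whisker_exchange]
        simp only [Category.assoc]
        monoidal
    _ = _ := by rw [YB2 hyb]

theorem sig3_eq : sigWDL ηS μD l3 = (rmap ηS l3 ▷ D) ≫ (α_ S D D).hom ≫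
    (S ◁ μD) := rfl

theorem goal2_lhs (hS : IsMonoid ηS μS) (h3 : WDL ηD μD ηS μS l3)
    (hyb : YB l1 l2 l3) :
    (λ_ (T ⊗ D)).inv ≫ ((ηS ≫ emap ηD l3) ▷ (T ⊗ D)) ≫
        (α_ S D (T ⊗ D)).hom ≫ (S ◁ (α_ D T D).inv) ≫ (S ◁ (l2 ▷ D)) ≫
        (S ◁ (α_ T D D).hom) ≫ (S ◁ (T ◁ sigWDL ηS μD l3)) ≫
        (S ◁ (α_ T S D).inv) ≫ (S ◁ (l1 ▷ D)) ≫ muPart T D μS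
      = ((rmap ηS l1 ≫ (emap ηD l3 ▷ T) ≫ (α_ S D T).hom ≫ (S ◁ l2)) ▷ D) ≫
          (α_ S (T ⊗ D) D).hom ≫ (S ◁ ((α_ T D D).hom ≫ (T ◁ μD))) := by
  rw [sig3_eq]
  calc (λ_ (T ⊗ D)).inv ≫ ((ηS ≫ emap ηD l3) ▷ (T ⊗ D)) ≫
        (α_ S D (T ⊗ D)).hom ≫ (S ◁ (α_ D T D).inv) ≫ (S ◁ (l2 ▷ D)) ≫
        (S ◁ (α_ T D D).hom) ≫
        (S ◁ (T ◁ ((rmap ηS l3 ▷ D) ≫ (α_ S D D).hom ≫ (S ◁ μD)))) ≫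
        (S ◁ (α_ T S D).inv) ≫ (S ◁ (l1 ▷ D)) ≫ muPart T D μS
      = (λ_ (T ⊗ D)).inv ≫ ((ηS ≫ emap ηD l3) ▷ (T ⊗ D)) ≫
        (α_ S D (T ⊗ D)).hom ≫
        (S ◁ ((α_ D T D).inv ≫ (l2 ▷ D) ≫ (α_ T D D).hom ≫
          (T ◁ ((rmap ηS l3 ▷ D) ≫ (α_ S D D).hom ≫ (S ◁ μD))) ≫
          (α_ T S D).inv ≫ (l1 ▷ D) ≫ (α_ S T D).hom)) ≫
        (α_ S S (T ⊗ D)).inv ≫ (μS ▷ (T ⊗ D)) := by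
        simp only [muPart, MonoidalCategory.whiskerLeft_comp, Category.assoc]
    _ = (λ_ (T ⊗ D)).inv ≫ ((ηS ≫ emap ηD l3) ▷ (T ⊗ D)) ≫
        (α_ S D (T ⊗ D)).hom ≫
        (S ◁ ((α_ D T D).inv ≫
          (((D ◁ rmap ηS l1) ≫ (α_ D S T).inv ≫ (l3 ▷ T) ≫
            (α_ S D T).hom ≫ (S ◁ l2)) ▷ D) ≫ (α_ S (T ⊗ D) D).hom ≫
          (S ◁ ((α_ T D D).hom ≫ (T ◁ μD))))) ≫
        (α_ S S (T ⊗ D)).inv ≫ (μS ▷ (T ⊗ D)) := by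
        rw [inner2 hyb]
    _ = (rmap ηS l1 ▷ D) ≫ (α_ S T D).hom ≫
        ((λ_ (S ⊗ (T ⊗ D))).inv ≫
          ((ηS ≫ emap ηD l3) ▷ (S ⊗ (T ⊗ D))) ≫
          (α_ S D (S ⊗ (T ⊗ D))).hom ≫ (S ◁ (α_ D S (T ⊗ D)).inv) ≫
          (S ◁ (l3 ▷ (T ⊗ D))) ≫ (S ◁ (α_ S D (T ⊗ D)).hom) ≫
          (α_ S S (D ⊗ (T ⊗ D))).inv ≫ (μS ▷ (D ⊗ (T ⊗ D)))) ≫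
        (S ◁ ((α_ D T D).inv ≫ (l2 ▷ D) ≫ (α_ T D D).hom ≫ (T ◁ μD))) := by
        have hins := insL ((rmap ηS l1 ▷ D) ≫ (α_ S T D).hom)
          (ηS ≫ emap ηD l3)
        have hins' := reassoc_of% hins
        simp only [Category.assoc] at hins' ⊢
        rw [← hins']
        rw [← whisker_exchange μS
          ((α_ D T D).inv ≫ (l2 ▷ D) ≫ (α_ T D D).hom ≫ (T ◁ μD))]
        simp only [MonoidalCategory.whiskerLeft_comp, comp_whiskerRight,
          Category.assoc]
        monoidal
    _ = (rmap ηS l1 ▷ D) ≫ (α_ S T D).hom ≫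
        ((emap ηD l3 ▷ (T ⊗ D)) ≫ (α_ S D (T ⊗ D)).hom) ≫
        (S ◁ ((α_ D T D).inv ≫ (l2 ▷ D) ≫ (α_ T D D).hom ≫ (T ◁ μD))) := by
        rw [e3_merge_ctx (T ⊗ D) hS h3]
    _ = ((rmap ηS l1 ≫ (emap ηD l3 ▷ T) ≫ (α_ S D T).hom ≫ (S ◁ l2)) ▷ D) ≫
          (α_ S (T ⊗ D) D).hom ≫ (S ◁ ((α_ T D D).hom ≫ (T ◁ μD))) := by
        simp only [MonoidalCategory.whiskerLeft_comp, comp_whiskerRight,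
          Category.assoc]
        monoidal

theorem goal2 (hS : IsMonoid ηS μS) (hD : IsMonoid ηD μD)
    (h2 : WDL ηD μD ηT μT l2) (h3 : WDL ηD μD ηS μS l3)
    (hyb : YB l1 l2 l3) :
    IterPre2 ηS μS l1 l3 (sigWDL ηS μD l3) l2 (nabWDL ηT μT l2)
      ((λ_ (𝟙_ C)).inv ≫ (ηS ⊗ₘ ηD) ≫ nabWDL ηS μS l3) := by
  unfold IterPre2
  rw [nuD_eq2 hD h3, RHScommon hS, goal2_rhs hS hD h2 h3, Mlem hyb]
  exact goal2_lhs hS h3 hyb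

/-- the H-collapse: `(μS⊗T)(S⊗σT)(l1⊗T)(T⊗l1) = l1(μT⊗S)`. -/
theorem Hlem (hS : IsMonoid ηS μS) (h1 : WDL ηT μT ηS μS l1) :
    (α_ T T S).hom ≫ (T ◁ l1) ≫ (α_ T S T).inv ≫ (l1 ▷ T) ≫
        (α_ S T T).hom ≫ (S ◁ sigWDL ηS μT l1) ≫ (α_ S S T).inv ≫ (μS ▷ T)
      = (μT ▷ S) ≫ l1 := by
  calc (α_ T T S).hom ≫ (T ◁ l1) ≫ (α_ T S T).inv ≫ (l1 ▷ T) ≫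
        (α_ S T T).hom ≫ (S ◁ sigWDL ηS μT l1) ≫ (α_ S S T).inv ≫ (μS ▷ T)
      = (α_ T T S).hom ≫ (T ◁ l1) ≫ (α_ T S T).inv ≫
          ((l1 ≫ nabWDL ηS μS l1) ▷ T) ≫ (α_ S T T).hom ≫ (S ◁ μT) := by
        simp only [sigWDL, nab_eq_r, rmap, comp_whiskerRight,
          MonoidalCategory.whiskerLeft_comp, Category.assoc]
        slice_lhs 10 11 => rw [associator_inv_naturality_right]
        slice_lhs 11 12 => rw [whisker_exchange]
        try simp only [Category.assoc]
        monoidal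
    _ = (α_ T T S).hom ≫ (T ◁ l1) ≫ (α_ T S T).inv ≫ (l1 ▷ T) ≫
          (α_ S T T).hom ≫ (S ◁ μT) := by rw [nab_absorb hS h1]
    _ = (μT ▷ S) ≫ l1 := (h1.1).symm

/-- `g`-lemma : the unit form of YB2. -/
theorem Lg (hyb : YB l1 l2 l3) :
    (ρ_ D).inv ≫ (D ◁ (ηT ≫ rmap ηS l1)) ≫ (α_ D S T).inv ≫ (l3 ▷ T) ≫
        (α_ S D T).hom ≫ (S ◁ l2)
      = rmap ηT l2 ≫ (T ◁ rmap ηS l3) ≫ (α_ T S D).inv ≫ (l1 ▷ D) ≫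
          (α_ S T D).hom := by
  have h : rmap ηT l2 ≫ (T ◁ rmap ηS l3) ≫ (α_ T S D).inv ≫ (l1 ▷ D) ≫
      (α_ S T D).hom = (ρ_ D).inv ≫ (D ◁ ηT) ≫ (l2 ≫ (T ◁ rmap ηS l3) ≫
        (α_ T S D).inv ≫ (l1 ▷ D) ≫ (α_ S T D).hom) := by
    rw [rmap]; simp only [Category.assoc]
  rw [h, YB2 hyb]
  simp only [MonoidalCategory.whiskerLeft_comp, Category.assoc]

/-- the final collapse of pre-1. -/
theorem step4 (hS : IsMonoid ηS μS) (h1 : WDL ηT μT ηS μS l1) :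
    (T ◁ (rmap ηT l2 ≫ (T ◁ rmap ηS l3) ≫ (α_ T S D).inv ≫ (l1 ▷ D) ≫
        (α_ S T D).hom)) ≫ (α_ T S (T ⊗ D)).inv ≫ (l1 ▷ (T ⊗ D)) ≫
        (α_ S T (T ⊗ D)).hom ≫ (S ◁ (α_ T T D).inv) ≫
        (S ◁ (sigWDL ηS μT l1 ▷ D)) ≫ muPart T D μS
      = nabWDL ηT μT l2 ≫ (T ◁ rmap ηS l3) ≫ (α_ T S D).inv ≫ (l1 ▷ D) ≫
          (α_ S T D).hom := by
  calc (T ◁ (rmap ηT l2 ≫ (T ◁ rmap ηS l3) ≫ (α_ T S D).inv ≫ (l1 ▷ D) ≫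
        (α_ S T D).hom)) ≫ (α_ T S (T ⊗ D)).inv ≫ (l1 ▷ (T ⊗ D)) ≫
        (α_ S T (T ⊗ D)).hom ≫ (S ◁ (α_ T T D).inv) ≫
        (S ◁ (sigWDL ηS μT l1 ▷ D)) ≫ muPart T D μS
      = (T ◁ rmap ηT l2) ≫ (T ◁ (T ◁ rmap ηS l3)) ≫
          (α_ T T (S ⊗ D)).inv ≫ (α_ (T ⊗ T) S D).inv ≫
          (((α_ T T S).hom ≫ (T ◁ l1) ≫ (α_ T S T).inv ≫ (l1 ▷ T) ≫
            (α_ S T T).hom ≫ (S ◁ sigWDL ηS μT l1) ≫ (α_ S S T).inv ≫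
            (μS ▷ T)) ▷ D) ≫ (α_ S T D).hom := by
        simp only [muPart, comp_whiskerRight, MonoidalCategory.whiskerLeft_comp,
          Category.assoc]
        monoidal
    _ = (T ◁ rmap ηT l2) ≫ (T ◁ (T ◁ rmap ηS l3)) ≫
          (α_ T T (S ⊗ D)).inv ≫ (α_ (T ⊗ T) S D).inv ≫
          (((μT ▷ S) ≫ l1) ▷ D) ≫ (α_ S T D).hom := by
        rw [Hlem hS h1]
    _ = nabWDL ηT μT l2 ≫ (T ◁ rmap ηS l3) ≫ (α_ T S D).inv ≫ (l1 ▷ D) ≫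
          (α_ S T D).hom := by
        rw [nab_eq_r]
        simp only [comp_whiskerRight, MonoidalCategory.whiskerLeft_comp,
          Category.assoc]
        slice_lhs 4 5 => rw [← associator_inv_naturality_left]
        slice_lhs 2 3 => rw [associator_inv_naturality_right]
        slice_lhs 3 4 => rw [whisker_exchange]
        try simp only [Category.assoc]
        try monoidal

theorem goal1 (hS : IsMonoid ηS μS) (hT : IsMonoid ηT μT)
    (h1 : WDL ηT μT ηS μS l1) (h2 : WDL ηD μD ηT μT l2)
    (hyb : YB l1 l2 l3) :
    IterPre1 ηS μS l1 (sigWDL ηS μT l1) l3 l2 (nabWDL ηT μT l2)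
      ((λ_ (𝟙_ C)).inv ≫ (ηS ⊗ₘ ηT) ≫ nabWDL ηS μS l1) := by
  unfold IterPre1
  rw [RHScommon hS, nuT_eq hS, MonoidalCategory.tensorHom_def]
  simp only [Category.assoc]
  rw [← rightUnitor_inv_naturality_assoc]
  calc nabWDL ηT μT l2 ≫ (ρ_ (T ⊗ D)).inv ≫ ((T ⊗ D) ◁ (ηT ≫ rmap ηS l1)) ≫
        (α_ T D (S ⊗ T)).hom ≫ (T ◁ (α_ D S T).inv) ≫ (T ◁ (l3 ▷ T)) ≫
        (T ◁ (α_ S D T).hom) ≫ (α_ T S (D ⊗ T)).inv ≫ (l1 ⊗ₘ l2) ≫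
        (α_ S T (T ⊗ D)).hom ≫ (S ◁ (α_ T T D).inv) ≫
        (S ◁ (sigWDL ηS μT l1 ▷ D)) ≫ muPart T D μS
      = nabWDL ηT μT l2 ≫
        (T ◁ ((ρ_ D).inv ≫ (D ◁ (ηT ≫ rmap ηS l1)) ≫ (α_ D S T).inv ≫
          (l3 ▷ T) ≫ (α_ S D T).hom ≫ (S ◁ l2))) ≫
        (α_ T S (T ⊗ D)).inv ≫ (l1 ▷ (T ⊗ D)) ≫ (α_ S T (T ⊗ D)).hom ≫
        (S ◁ (α_ T T D).inv) ≫ (S ◁ (sigWDL ηS μT l1 ▷ D)) ≫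
        muPart T D μS := by
        congr 1
        rw [MonoidalCategory.tensorHom_def]
        slice_lhs 8 9 => rw [← whisker_exchange]
        simp only [MonoidalCategory.whiskerLeft_comp, Category.assoc]
        monoidal
    _ = nabWDL ηT μT l2 ≫
        (T ◁ (rmap ηT l2 ≫ (T ◁ rmap ηS l3) ≫ (α_ T S D).inv ≫ (l1 ▷ D) ≫
          (α_ S T D).hom)) ≫
        (α_ T S (T ⊗ D)).inv ≫ (l1 ▷ (T ⊗ D)) ≫ (α_ S T (T ⊗ D)).hom ≫
        (S ◁ (α_ T T D).inv) ≫ (S ◁ (sigWDL ηS μT l1 ▷ D)) ≫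
        muPart T D μS := by rw [Lg hyb]
    _ = nabWDL ηT μT l2 ≫ nabWDL ηT μT l2 ≫ (T ◁ rmap ηS l3) ≫
        (α_ T S D).inv ≫ (l1 ▷ D) ≫ (α_ S T D).hom := by rw [step4 hS h1]
    _ = nabWDL ηT μT l2 ≫ (T ◁ rmap ηS l3) ≫ (α_ T S D).inv ≫ (l1 ▷ D) ≫
        (α_ S T D).hom := by
        slice_lhs 1 2 => rw [nab2_idem hT h2]
        simp only [Category.assoc]

/-- `(μS ⊗ T) ∘ (S ⊗ l1) ∘ (νT ⊗ S) = e1`. -/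
theorem e1nu (hS : IsMonoid ηS μS) (h1 : WDL ηT μT ηS μS l1) :
    (λ_ S).inv ≫ ((ηT ≫ rmap ηS l1) ▷ S) ≫ (α_ S T S).hom ≫ (S ◁ l1) ≫
        (α_ S S T).inv ≫ (μS ▷ T)
      = emap ηT l1 := by
  have h' : (l1 ▷ S) ≫ (α_ S T S).hom ≫ (S ◁ l1) ≫ (α_ S S T).inv ≫
      (μS ▷ T) = (α_ T S S).hom ≫ (T ◁ μS) ≫ l1 := by
    rw [h1.2.1]; simp only [Iso.hom_inv_id_assoc]
  simp only [rmap, comp_whiskerRight, Category.assoc]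
  rw [h']
  slice_lhs 4 5 => rw [associator_naturality_middle]
  slice_lhs 5 6 => rw [← MonoidalCategory.whiskerLeft_comp, hS.1]
  simp only [emap, Category.assoc]
  congr 1
  monoidal

theorem e1nu_ctx (X : C) (hS : IsMonoid ηS μS) (h1 : WDL ηT μT ηS μS l1) :
    (λ_ (S ⊗ X)).inv ≫ ((ηT ≫ rmap ηS l1) ▷ (S ⊗ X)) ≫
        (α_ S T (S ⊗ X)).hom ≫ (S ◁ (α_ T S X).inv) ≫ (S ◁ (l1 ▷ X)) ≫
        (S ◁ (α_ S T X).hom) ≫ (α_ S S (T ⊗ X)).inv ≫ (μS ▷ (T ⊗ X))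
      = (emap ηT l1 ▷ X) ≫ (α_ S T X).hom := by
  calc (λ_ (S ⊗ X)).inv ≫ ((ηT ≫ rmap ηS l1) ▷ (S ⊗ X)) ≫
        (α_ S T (S ⊗ X)).hom ≫ (S ◁ (α_ T S X).inv) ≫ (S ◁ (l1 ▷ X)) ≫
        (S ◁ (α_ S T X).hom) ≫ (α_ S S (T ⊗ X)).inv ≫ (μS ▷ (T ⊗ X))
      = (((λ_ S).inv ≫ ((ηT ≫ rmap ηS l1) ▷ S) ≫ (α_ S T S).hom ≫
          (S ◁ l1) ≫ (α_ S S T).inv ≫ (μS ▷ T)) ▷ X) ≫ (α_ S T X).hom := by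
        simp only [comp_whiskerRight, MonoidalCategory.whiskerLeft_comp,
          Category.assoc]
        monoidal
    _ = _ := by rw [e1nu hS h1]

/-- contextual form of `e_mul` for `l1` :
`(μS⊗T⊗X)∘(S⊗l1⊗X)∘(e1⊗S⊗X) = (e1⊗X)∘(μS⊗X)` (after α's). -/
theorem e1_merge_ctx (X : C) (hS : IsMonoid ηS μS)
    (h1 : WDL ηT μT ηS μS l1) :
    (emap ηT l1 ▷ (S ⊗ X)) ≫ (α_ S T (S ⊗ X)).hom ≫
        (S ◁ (α_ T S X).inv) ≫ (S ◁ (l1 ▷ X)) ≫ (S ◁ (α_ S T X).hom) ≫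
        (α_ S S (T ⊗ X)).inv ≫ (μS ▷ (T ⊗ X))
      = (α_ S S X).inv ≫ (μS ▷ X) ≫ (emap ηT l1 ▷ X) ≫ (α_ S T X).hom := by
  calc (emap ηT l1 ▷ (S ⊗ X)) ≫ (α_ S T (S ⊗ X)).hom ≫
        (S ◁ (α_ T S X).inv) ≫ (S ◁ (l1 ▷ X)) ≫ (S ◁ (α_ S T X).hom) ≫
        (α_ S S (T ⊗ X)).inv ≫ (μS ▷ (T ⊗ X))
      = (α_ S S X).inv ≫ (((emap ηT l1 ▷ S) ≫ (α_ S T S).hom ≫ (S ◁ l1) ≫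
          (α_ S S T).inv ≫ (μS ▷ T)) ▷ X) ≫ (α_ S T X).hom := by
        simp only [comp_whiskerRight, MonoidalCategory.whiskerLeft_comp,
          Category.assoc]
        monoidal
    _ = _ := by
        rw [← e_mul hS h1]
        simp only [comp_whiskerRight, Category.assoc]

/-- factorisation of `ψ'` used in the computation of `ν_{T⊗D}`. -/
theorem psiP_fact (h1 : WDL ηT μT ηS μS l1) :
    nabWDL ηT μT l2 ≫ (T ◁ rmap ηS l3) ≫ (α_ T S D).inv ≫ (l1 ▷ D) ≫
        (α_ S T D).hom
      = (T ◁ (rmap ηT l2 ≫ (T ◁ rmap ηS l3) ≫ (α_ T S D).inv ≫ (l1 ▷ D) ≫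
          (α_ S T D).hom)) ≫ (α_ T S (T ⊗ D)).inv ≫ (l1 ▷ (T ⊗ D)) ≫
          (α_ S T (T ⊗ D)).hom ≫ (S ◁ ((α_ T T D).inv ≫ (μT ▷ D))) := by
  rw [nab_eq_r]
  simp only [Category.assoc]
  slice_lhs 3 4 => rw [← whisker_exchange]
  slice_lhs 4 5 => rw [associator_inv_naturality_left]
  slice_lhs 5 6 => rw [← comp_whiskerRight, h1.1]
  simp only [comp_whiskerRight, MonoidalCategory.whiskerLeft_comp,
    Category.assoc]
  monoidal

theorem suffix_lem (h1 : WDL ηT μT ηS μS l1) :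
    (emap ηT l1 ▷ (T ⊗ D)) ≫ (α_ S T (T ⊗ D)).hom ≫
        (S ◁ ((α_ T T D).inv ≫ (μT ▷ D)))
      = (α_ S T D).inv ≫ (nabWDL ηS μS l1 ▷ D) ≫ (α_ S T D).hom := by
  rw [nab_eq_e h1]
  simp only [comp_whiskerRight, MonoidalCategory.whiskerLeft_comp,
    Category.assoc]
  monoidal

theorem target_eq :
    (λ_ (𝟙_ C)).inv ≫ (((λ_ (𝟙_ C)).inv ≫ (ηD ⊗ₘ ηT)) ⊗ₘ ηS) ≫
        (l2 ▷ S) ≫ (α_ T D S).hom ≫ (T ◁ l3) ≫ (α_ T S D).inv ≫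
        (l1 ▷ D) ≫ (α_ S T D).hom
      = ηT ≫ emap ηD l2 ≫ (T ◁ rmap ηS l3) ≫ (α_ T S D).inv ≫ (l1 ▷ D) ≫
          (α_ S T D).hom := by
  rw [MonoidalCategory.tensorHom_def, tensorHom_def']
  simp only [emap, rmap, MonoidalCategory.whiskerLeft_comp,
    comp_whiskerRight, Category.assoc]
  slice_lhs 5 6 => rw [whisker_exchange]
  simp only [Category.assoc]
  monoidal

theorem goal3 (hS : IsMonoid ηS μS) (hD : IsMonoid ηD μD)
    (h1 : WDL ηT μT ηS μS l1) (h3 : WDL ηD μD ηS μS l3)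
    (hyb : YB l1 l2 l3) :
    nuVW ηS μS l1 l3 (nabWDL ηT μT l2)
        ((λ_ (𝟙_ C)).inv ≫ (ηS ⊗ₘ ηT) ≫ nabWDL ηS μS l1)
        ((λ_ (𝟙_ C)).inv ≫ (ηS ⊗ₘ ηD) ≫ nabWDL ηS μS l3)
      = (λ_ (𝟙_ C)).inv ≫ (((λ_ (𝟙_ C)).inv ≫ (ηD ⊗ₘ ηT)) ⊗ₘ ηS) ≫
          (l2 ▷ S) ≫ (α_ T D S).hom ≫ (T ◁ l3) ≫ (α_ T S D).inv ≫
          (l1 ▷ D) ≫ (α_ S T D).hom := by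
  have hν : ηD ≫ rmap ηS l3 = ηS ≫ emap ηD l3 := by
    rw [← nuD_eq hS, nuD_eq2 hD h3]
  rw [target_eq]
  unfold nuVW
  rw [nuT_eq hS, nuD_eq hS, nabla_eq, psiTD_unit, psiP_fact h1, ← Lg hyb]
  simp only [muPart, tensorHom_def', Category.assoc]
  rw [← leftUnitor_inv_naturality_assoc]
  rw [reassoc_of% (e1nu_ctx D hS h1)]
  trans ((ηD ≫ rmap ηS l3) ≫
    (S ◁ ((ρ_ D).inv ≫ (D ◁ (ηT ≫ rmap ηS l1)) ≫ (α_ D S T).inv ≫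
      (l3 ▷ T) ≫ (α_ S D T).hom ≫ (S ◁ l2))) ≫
    (emap ηT l1 ▷ (S ⊗ (T ⊗ D))) ≫ (α_ S T (S ⊗ (T ⊗ D))).hom ≫
    (S ◁ (α_ T S (T ⊗ D)).inv) ≫ (S ◁ (l1 ▷ (T ⊗ D))) ≫
    (S ◁ (α_ S T (T ⊗ D)).hom) ≫ (α_ S S (T ⊗ (T ⊗ D))).inv ≫
    (μS ▷ (T ⊗ (T ⊗ D))) ≫ (S ◁ ((α_ T T D).inv ≫ (μT ▷ D))))
  · rw [whisker_exchange_assoc (emap ηT l1)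
      ((ρ_ D).inv ≫ (D ◁ (ηT ≫ rmap ηS l1)) ≫ (α_ D S T).inv ≫
        (l3 ▷ T) ≫ (α_ S D T).hom ≫ (S ◁ l2)),
      ← whisker_exchange μS ((α_ T T D).inv ≫ (μT ▷ D))]
    simp only [MonoidalCategory.whiskerLeft_comp, Category.assoc]
    monoidal
  rw [reassoc_of% (e1_merge_ctx (T ⊗ D) hS h1)]
  trans ((ηT ≫ rmap ηS l1) ≫ (λ_ (S ⊗ T)).inv ≫
    ((ηS ≫ emap ηD l3) ▷ (S ⊗ T)) ≫ (α_ S D (S ⊗ T)).hom ≫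
    (S ◁ (α_ D S T).inv) ≫ (S ◁ (l3 ▷ T)) ≫ (S ◁ (α_ S D T).hom) ≫
    (α_ S S (D ⊗ T)).inv ≫ (μS ▷ (D ⊗ T)) ≫ (S ◁ l2) ≫
    (emap ηT l1 ▷ (T ⊗ D)) ≫ (α_ S T (T ⊗ D)).hom ≫
    (S ◁ ((α_ T T D).inv ≫ (μT ▷ D))))
  · simp only [Category.assoc]
    rw [← reassoc_of% (insL (ηT ≫ rmap ηS l1) (ηS ≫ emap ηD l3))]
    rw [← whisker_exchange_assoc μS l2]
    rw [← hν]
    simp only [MonoidalCategory.whiskerLeft_comp, Category.assoc]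
    monoidal
  simp only [Category.assoc]
  rw [reassoc_of% (e3_merge_ctx T hS h3)]
  rw [suffix_lem h1]
  rw [← reassoc_of% (Mlem hyb)]
  simp only [Iso.hom_inv_id_assoc]
  rw [← comp_whiskerRight_assoc, nab_absorb hS h1]

end Concrete

theorem statement18 {S T D : C} (ηS : 𝟙_ C ⟶ S) (μS : S ⊗ S ⟶ S)
    (ηT : 𝟙_ C ⟶ T) (μT : T ⊗ T ⟶ T) (ηD : 𝟙_ C ⟶ D) (μD : D ⊗ D ⟶ D)
    (hS : IsMonoid ηS μS) (hT : IsMonoid ηT μT) (hD : IsMonoid ηD μD)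
    (l1 : T ⊗ S ⟶ S ⊗ T) (l2 : D ⊗ T ⟶ T ⊗ D) (l3 : D ⊗ S ⟶ S ⊗ D)
    (h1 : WDL ηT μT ηS μS l1) (h2 : WDL ηD μD ηT μT l2)
    (h3 : WDL ηD μD ηS μS l3) (hyb : YB l1 l2 l3) :
    IterPre1 ηS μS l1 (sigWDL ηS μT l1) l3 l2 (nabWDL ηT μT l2)
        ((λ_ (𝟙_ C)).inv ≫ (ηS ⊗ₘ ηT) ≫ nabWDL ηS μS l1) ∧
      IterPre2 ηS μS l1 l3 (sigWDL ηS μD l3) l2 (nabWDL ηT μT l2)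
        ((λ_ (𝟙_ C)).inv ≫ (ηS ⊗ₘ ηD) ≫ nabWDL ηS μS l3) ∧
      nuVW ηS μS l1 l3 (nabWDL ηT μT l2)
          ((λ_ (𝟙_ C)).inv ≫ (ηS ⊗ₘ ηT) ≫ nabWDL ηS μS l1)
          ((λ_ (𝟙_ C)).inv ≫ (ηS ⊗ₘ ηD) ≫ nabWDL ηS μS l3)
        = (λ_ (𝟙_ C)).inv ≫ (((λ_ (𝟙_ C)).inv ≫ (ηD ⊗ₘ ηT)) ⊗ₘ ηS) ≫
            (l2 ▷ S) ≫ (α_ T D S).hom ≫ (T ◁ l3) ≫ (α_ T S D).inv ≫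
            (l1 ▷ D) ≫ (α_ S T D).hom := by
  exact ⟨goal1 hS hT h1 h2 hyb, goal2 hS hD h2 h3 hyb, goal3 hS hD h1 h3 hyb⟩

end IteratedWCP
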